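/- Let T > 0, σ > 0, S₀ > 0, K > 0, r ∈ ℝ, and let W be a real random variable distributed according to the Gaussian measure with mean 0 and variance T. Then the risk-neutral price of the European call option satisfies the Black–Scholes–Merton formula: e^{−rT} · E[ max(0, S₀·exp(σ·W + (r − σ²/2)·T) − K) ] = S₀·Φ(d₁) − K·e^{−rT}·Φ(d₂), where d₁ = (1/(σ√T))·(log(S₀/K) + (r + σ²/2)·T) and d₂ = d₁ − σ√T. -/

import Mathlib

open MeasureTheory ProbabilityTheory Real
open scoped NNReal ENNReal

/-- The standard normal cumulative distribution function
`Φ(x) = (1/√(2π)) ∫_{-∞}^x e^{-y²/2} dy`. -/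
noncomputable def stdNormalCDF (x : ℝ) : ℝ :=
  (Real.sqrt (2 * Real.pi))⁻¹ * ∫ y in Set.Iic x, Real.exp (-y ^ 2 / 2)

/-- Integral of a Gaussian density over `Ici b` in terms of the standard normal CDF. -/
lemma gaussian_Ici_integral (t : NNReal) (ht : 0 < t) (m b : ℝ) :
    ∫ w in Set.Ici b, gaussianPDFReal m t w =
      stdNormalCDF ((m - b) / Real.sqrt t) := by
  have ht' : (0:ℝ) < (t:ℝ) := ht
  have hst : (0:ℝ) < Real.sqrt t := Real.sqrt_pos.2 ht'
  set c : ℝ := (m - b) / Real.sqrt t with hc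
  have himg : (fun y : ℝ => m - Real.sqrt t * y) '' Set.Iic c = Set.Ici b := by
    ext w
    constructor
    · rintro ⟨y, hy, rfl⟩
      have h1 : Real.sqrt t * y ≤ Real.sqrt t * c := mul_le_mul_of_nonneg_left hy hst.le
      have hcc : Real.sqrt t * c = m - b := by
        rw [hc]; field_simp
      simp only [Set.mem_Ici]
      linarith
    · intro hw
      simp only [Set.mem_Ici] at hw
      refine ⟨(m - w) / Real.sqrt t, ?_, ?_⟩
      · simp only [Set.mem_Iic, hc]
        exact div_le_div_of_nonneg_right (by linarith) hst.le
      · field_simp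
        ring
  have hderiv : ∀ x ∈ Set.Iic c, HasDerivWithinAt (fun y : ℝ => m - Real.sqrt t * y)
      (-(Real.sqrt t)) (Set.Iic c) x := by
    intro x _
    simpa using (((hasDerivAt_id x).const_mul (Real.sqrt t)).const_sub m).hasDerivWithinAt
  have hinj : Set.InjOn (fun y : ℝ => m - Real.sqrt t * y) (Set.Iic c) := by
    intro a _ b' _ hab
    simp only at hab
    have : Real.sqrt t * a = Real.sqrt t * b' := by linarith
    exact mul_left_cancel₀ hst.ne' this
  have hcv := integral_image_eq_integral_abs_deriv_smul (measurableSet_Iic (a := c))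
      hderiv hinj (fun w => Real.exp (-(w - m) ^ 2 / (2 * (t : ℝ))))
  rw [himg] at hcv
  have hsq : Real.sqrt (t:ℝ) * Real.sqrt (t:ℝ) = (t:ℝ) := Real.mul_self_sqrt ht'.le
  have hrhs : ∀ y : ℝ, |(-(Real.sqrt t))| • Real.exp (-((m - Real.sqrt t * y) - m) ^ 2 / (2 * (t:ℝ)))
      = Real.sqrt t * Real.exp (-y ^ 2 / 2) := by
    intro y
    have h1 : (m - Real.sqrt t * y - m) ^ 2 = (Real.sqrt t * y) ^ 2 := by ring
    have h2 : (Real.sqrt t * y) ^ 2 = (t:ℝ) * y ^ 2 := by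
      rw [mul_pow, Real.sq_sqrt ht'.le]
    rw [h1, h2, abs_neg, abs_of_pos hst, smul_eq_mul]
    congr 1
    field_simp
  simp only [hrhs] at hcv
  have : ∫ w in Set.Ici b, gaussianPDFReal m t w
      = (Real.sqrt (2 * π * t))⁻¹ * ∫ w in Set.Ici b, Real.exp (-(w - m) ^ 2 / (2 * (t:ℝ))) := by
    rw [← integral_const_mul]
    rfl
  rw [this, hcv, integral_const_mul, stdNormalCDF]
  have h2pit : Real.sqrt (2 * π * t) = Real.sqrt (2 * π) * Real.sqrt t :=
    Real.sqrt_mul (by positivity) _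
  rw [h2pit]
  have h2pi : (0:ℝ) < Real.sqrt (2 * π) := Real.sqrt_pos.2 (by positivity)
  field_simp

/-- The Black–Scholes–Merton formula: the risk-neutral price of the European call option
equals `S₀ Φ(d₁) - K e^{-rT} Φ(d₂)`. -/
theorem bsm_european_call_price (T : NNReal) (hT : 0 < T) (σ S₀ K r : ℝ)
    (hσ : 0 < σ) (hS₀ : 0 < S₀) (hK : 0 < K) :
    Real.exp (-r * T) *
        ∫ w, max 0 (S₀ * Real.exp (σ * w + (r - σ ^ 2 / 2) * T) - K) ∂(gaussianReal 0 T)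
      = S₀ * stdNormalCDF ((1 / (σ * Real.sqrt T)) *
            (Real.log (S₀ / K) + (r + σ ^ 2 / 2) * T))
        - K * Real.exp (-r * T) * stdNormalCDF ((1 / (σ * Real.sqrt T)) *
            (Real.log (S₀ / K) + (r + σ ^ 2 / 2) * T) - σ * Real.sqrt T) := by
  have ht' : (0:ℝ) < (T:ℝ) := hT
  set t : ℝ := (T:ℝ) with htdef
  set μ' : ℝ := r - σ ^ 2 / 2 with hμ'
  set b : ℝ := (Real.log (K / S₀) - μ' * t) / σ with hb
  set C₁ : ℝ := S₀ * Real.exp (μ' * t + σ ^ 2 * t / 2) with hC₁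
  have hst : (0:ℝ) < Real.sqrt t := Real.sqrt_pos.2 ht'
  have hsq : Real.sqrt t * Real.sqrt t = t := Real.mul_self_sqrt ht'.le
  -- rewrite the integral against the Gaussian measure as a Lebesgue integral with density
  rw [gaussianReal_of_var_ne_zero _ hT.ne',
    show gaussianPDF 0 T = fun x => ((Real.toNNReal (gaussianPDFReal 0 T x) : ℝ≥0) : ℝ≥0∞)
      from rfl,
    integral_withDensity_eq_integral_smul ((measurable_gaussianPDFReal 0 T).real_toNNReal) _]
  -- the integrand equals an indicator
  have hkey : ∀ w : ℝ, gaussianPDFReal 0 T w * (S₀ * Real.exp (σ * w + μ' * t))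
      = C₁ * gaussianPDFReal (σ * t) T w := by
    intro w
    simp only [gaussianPDFReal, hC₁]
    have hexp : Real.exp (-(w - 0) ^ 2 / (2 * t)) * Real.exp (σ * w + μ' * t)
        = Real.exp (μ' * t + σ ^ 2 * t / 2) * Real.exp (-(w - σ * t) ^ 2 / (2 * t)) := by
      rw [← Real.exp_add, ← Real.exp_add]
      congr 1
      field_simp
      ring
    calc (Real.sqrt (2 * π * t))⁻¹ * Real.exp (-(w - 0) ^ 2 / (2 * t))
          * (S₀ * Real.exp (σ * w + μ' * t))
        = (Real.sqrt (2 * π * t))⁻¹ * S₀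
          * (Real.exp (-(w - 0) ^ 2 / (2 * t)) * Real.exp (σ * w + μ' * t)) := by ring
      _ = (Real.sqrt (2 * π * t))⁻¹ * S₀
          * (Real.exp (μ' * t + σ ^ 2 * t / 2) * Real.exp (-(w - σ * t) ^ 2 / (2 * t))) := by
          rw [hexp]
      _ = S₀ * Real.exp (μ' * t + σ ^ 2 * t / 2)
          * ((Real.sqrt (2 * π * t))⁻¹ * Real.exp (-(w - σ * t) ^ 2 / (2 * t))) := by ring
  have hthresh : ∀ w : ℝ, 0 ≤ S₀ * Real.exp (σ * w + μ' * t) - K ↔ b ≤ w := by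
    intro w
    rw [sub_nonneg, hb, div_le_iff₀ hσ]
    have hKS : (0:ℝ) < K / S₀ := by positivity
    constructor
    · intro h
      have h2 : K / S₀ ≤ Real.exp (σ * w + μ' * t) := (div_le_iff₀ hS₀).2 (by linarith)
      have h3 := (Real.log_le_iff_le_exp hKS).2 h2
      rw [Real.log_div hK.ne' hS₀.ne'] at h3
      have h4 : Real.log (K / S₀) ≤ σ * w + μ' * t := by
        rw [Real.log_div hK.ne' hS₀.ne']; linarith
      linarith
    · intro h
      have h3 : Real.log (K / S₀) ≤ σ * w + μ' * t := by linarith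
      have h2 := (Real.log_le_iff_le_exp hKS).1 h3
      have h4 := (div_le_iff₀ hS₀).1 h2
      linarith
  have hind : ∀ w : ℝ,
      (Real.toNNReal (gaussianPDFReal 0 T w) : ℝ) • max 0 (S₀ * Real.exp (σ * w + μ' * t) - K)
      = Set.indicator (Set.Ici b)
          (fun w => C₁ * gaussianPDFReal (σ * t) T w - K * gaussianPDFReal 0 T w) w := by
    intro w
    rw [smul_eq_mul, Real.coe_toNNReal _ (gaussianPDFReal_nonneg 0 T w)]
    by_cases hw : b ≤ w
    · rw [Set.indicator_of_mem (Set.mem_Ici.2 hw)]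
      rw [max_eq_right ((hthresh w).2 hw)]
      rw [mul_sub, hkey w]
      ring
    · rw [Set.indicator_of_notMem (by simpa using hw)]
      rw [max_eq_left]
      · ring
      · by_contra hcon
        push_neg at hcon
        exact hw ((hthresh w).1 hcon.le)
  have hsmul : (fun w => (Real.toNNReal (gaussianPDFReal 0 T w) : ℝ≥0)
        • max 0 (S₀ * Real.exp (σ * w + (r - σ ^ 2 / 2) * t) - K))
      = Set.indicator (Set.Ici b)
          (fun w => C₁ * gaussianPDFReal (σ * t) T w - K * gaussianPDFReal 0 T w) := by
    funext w
    rw [NNReal.smul_def]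
    exact hind w
  rw [hsmul, integral_indicator measurableSet_Ici]
  rw [integral_sub (((integrable_gaussianPDFReal (σ * t) T).const_mul C₁).restrict)
    (((integrable_gaussianPDFReal 0 T).const_mul K).restrict)]
  rw [integral_const_mul, integral_const_mul,
    gaussian_Ici_integral T hT (σ * t) b, gaussian_Ici_integral T hT 0 b]
  have hlog : Real.log (K / S₀) = -Real.log (S₀ / K) := by
    rw [Real.log_div hK.ne' hS₀.ne', Real.log_div hS₀.ne' hK.ne']
    ring
  obtain ⟨u, hu, hu0, hut⟩ : ∃ u : ℝ, u = Real.sqrt t ∧ 0 < u ∧ u * u = t :=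
    ⟨_, rfl, hst, hsq⟩
  have hd1 : (σ * t - b) / Real.sqrt t
      = 1 / (σ * Real.sqrt t) * (Real.log (S₀ / K) + (r + σ ^ 2 / 2) * t) := by
    rw [hb, hlog, hμ', ← hu, ← hut]
    field_simp
    ring
  have hd2 : (0 - b) / Real.sqrt t
      = 1 / (σ * Real.sqrt t) * (Real.log (S₀ / K) + (r + σ ^ 2 / 2) * t)
        - σ * Real.sqrt t := by
    rw [hb, hlog, hμ', ← hu, ← hut]
    field_simp
    ring
  have hC : Real.exp (-r * t) * C₁ = S₀ := by
    rw [hC₁, hμ', mul_comm S₀, ← mul_assoc, ← Real.exp_add,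
      show -r * t + ((r - σ ^ 2 / 2) * t + σ ^ 2 * t / 2) = 0 by ring, Real.exp_zero, one_mul]
  rw [hd1, hd2, mul_sub, ← mul_assoc, hC]
  ring
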